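/- Let α ∈ ℤ, β ∈ ℝ, γ > 0 and n ∈ ℂ³, let E₀ be the twisted wave with parameters (α,β,γ) and polarization vector n, and set k₀ = (0, γ, β) ∈ ℝ³. Then for every x = (r cos φ, r sin φ, z) with r > 0, the cartesian curl satisfies curl E₀(x) = e^{i(αφ + βz)} R_φ N(i k₀ × n) (J_{α+1}(γr), J_{α−1}(γr), J_α(γr))ᵀ, i.e. the curl of a twisted wave is obtained by replacing the polarization vector n by i k₀ × n. -/

import Mathlib

noncomputable section
set_option maxHeartbeats 1600000

open Real MeasureTheory

abbrev V3 : Type := Fin 3 → ℝ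
abbrev C3 : Type := Fin 3 → ℂ

/-- Partial derivative of a scalar field in the `i`-th coordinate direction. -/
def pd (i : Fin 3) (f : V3 → ℂ) (x : V3) : ℂ := fderiv ℝ f x (Pi.single i 1)

/-- Componentwise Laplacian of a scalar field. -/
def lap (f : V3 → ℂ) (x : V3) : ℂ := ∑ i, pd i (pd i f) x

/-- Rotation by angle `θ` about the `e₃` axis. -/
def Rot (θ : ℝ) : Matrix (Fin 3) (Fin 3) ℝ :=
  !![Real.cos θ, -Real.sin θ, 0; Real.sin θ, Real.cos θ, 0; 0, 0, 1]

/-- Complexified rotation matrix. -/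
def RotC (θ : ℝ) : Matrix (Fin 3) (Fin 3) ℂ := (Rot θ).map (fun a => (a : ℂ))

/-- The polarization tensor N(n). -/
def Nmat (n : C3) : Matrix (Fin 3) (Fin 3) ℂ :=
  !![(n 0 + Complex.I * n 1)/2, (n 0 - Complex.I * n 1)/2, 0;
     (n 1 - Complex.I * n 0)/2, (n 1 + Complex.I * n 0)/2, 0;
     0, 0, n 2]

/-- Bessel function of integer order, via the Bessel integral
`J_ν(A) = (1/2π) ∫₀^{2π} e^{i(νφ − A sin φ)} dφ`. -/
def besselJ (ν : ℤ) (A : ℝ) : ℂ :=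
  (1/(2*Real.pi)) * ∫ φ in (0:ℝ)..(2*Real.pi),
    Complex.exp (Complex.I * (((ν : ℝ) * φ - A * Real.sin φ : ℝ) : ℂ))

/-- The Bessel vector `(J_{α+1}(γr), J_{α−1}(γr), J_α(γr))`. -/
def Jvec (α : ℤ) (γ r : ℝ) : C3 :=
  ![besselJ (α+1) (γ*r), besselJ (α-1) (γ*r), besselJ α (γ*r)]

/-- Twisted wave with parameters `(α, β, γ)` and polarization vector `n`,
expressed in cylindrical coordinates:
`E₀ = e^{i(αφ+βz)} R_φ N(n) (J_{α+1}(γr), J_{α−1}(γr), J_α(γr))ᵀ`. -/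
def twistedCyl (α : ℤ) (β γ : ℝ) (n : C3) (r φ z : ℝ) : C3 :=
  Complex.exp (Complex.I * (((α : ℝ) * φ + β * z : ℝ) : ℂ)) •
    (RotC φ).mulVec ((Nmat n).mulVec (Jvec α γ r))

/-- Complexified cross product. -/
def crossC (a b : C3) : C3 :=
  ![a 1 * b 2 - a 2 * b 1, a 2 * b 0 - a 0 * b 2, a 0 * b 1 - a 1 * b 0]

/-- Cartesian curl of a vector field. -/
def curl3 (E : V3 → C3) (x : V3) : C3 :=
  ![pd 1 (fun y => E y 2) x - pd 2 (fun y => E y 1) x,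
    pd 2 (fun y => E y 0) x - pd 0 (fun y => E y 2) x,
    pd 0 (fun y => E y 1) x - pd 1 (fun y => E y 0) x]


/-! ### Auxiliary material for the proof -/

def kerph (α : ℤ) (β γ ψ : ℝ) (x : V3) : ℝ :=
  (α:ℝ)*ψ + β * x 2 - γ*(x 0 * Real.sin ψ - x 1 * Real.cos ψ)

def ker (α : ℤ) (β γ ψ : ℝ) (x : V3) : ℂ :=
  Complex.exp (Complex.I * ((kerph α β γ ψ x : ℝ) : ℂ))

def hfun (ν : ℤ) (A φ ψ : ℝ) : ℂ :=
  Complex.exp (Complex.I * (((ν:ℝ)*ψ - A*Real.sin (ψ - φ) : ℝ) : ℂ))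

def Fvec (α : ℤ) (β γ : ℝ) (n : C3) (x : V3) : C3 :=
  fun i => (1/(2*(Real.pi:ℂ))) *
    ∫ ψ in (0:ℝ)..(2*Real.pi), ker α β γ ψ x * (RotC ψ).mulVec n i

def projC (i : Fin 3) : V3 →L[ℝ] ℂ :=
  Complex.ofRealCLM.comp (ContinuousLinearMap.proj i)

def kerlin (β γ ψ : ℝ) : V3 →L[ℝ] ℂ :=
  ((Complex.I * (-(γ * Real.sin ψ) : ℝ)) • projC 0
   + (Complex.I * ((γ * Real.cos ψ) : ℝ)) • projC 1)
   + (Complex.I * ((β : ℝ)) ) • projC 2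

def kvC (β γ ψ : ℝ) : C3 :=
  ![((-(γ * Real.sin ψ) : ℝ) : ℂ), (((γ * Real.cos ψ) : ℝ) : ℂ), ((β : ℝ) : ℂ)]

lemma bessel_shift (ν : ℤ) (A φ : ℝ) :
    (∫ ψ in (0:ℝ)..(2*Real.pi),
      Complex.exp (Complex.I * (((ν : ℝ) * ψ - A * Real.sin (ψ - φ) : ℝ) : ℂ)))
    = (2*Real.pi) * Complex.exp (Complex.I * (((ν:ℝ) * φ : ℝ) : ℂ)) * besselJ ν A := by
  have hper : Function.Periodic
      (fun θ : ℝ => Complex.exp (Complex.I * (((ν : ℝ) * θ - A * Real.sin θ : ℝ) : ℂ))) (2*Real.pi) := by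
    intro θ
    show Complex.exp (Complex.I * (((ν : ℝ) * (θ + 2*Real.pi) - A * Real.sin (θ + 2*Real.pi) : ℝ) : ℂ))
       = Complex.exp (Complex.I * (((ν : ℝ) * θ - A * Real.sin θ : ℝ) : ℂ))
    have h2 : (((ν:ℝ) * (θ + 2*Real.pi) - A * Real.sin (θ + 2*Real.pi) : ℝ) : ℂ)
        = (((ν:ℝ) * θ - A * Real.sin θ : ℝ) : ℂ) + (ν:ℂ) * (2*Real.pi) := by
      push_cast [Real.sin_add_two_pi]; ring
    rw [h2, mul_add, Complex.exp_add]
    have h1 : Complex.exp (Complex.I * ((ν:ℂ) * (2*Real.pi))) = 1 := by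
      have := Complex.exp_int_mul_two_pi_mul_I ν
      rw [← this]; ring_nf
    rw [h1, mul_one]
  have key : (∫ ψ in (0:ℝ)..(2*Real.pi),
      Complex.exp (Complex.I * (((ν : ℝ) * ψ - A * Real.sin (ψ - φ) : ℝ) : ℂ)))
      = Complex.exp (Complex.I * (((ν:ℝ) * φ : ℝ) : ℂ)) *
        ∫ ψ in (0:ℝ)..(2*Real.pi),
          Complex.exp (Complex.I * (((ν : ℝ) * (ψ - φ) - A * Real.sin (ψ - φ) : ℝ) : ℂ)) := by
    rw [← intervalIntegral.integral_const_mul]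
    apply intervalIntegral.integral_congr
    intro ψ _
    show Complex.exp (Complex.I * (((ν : ℝ) * ψ - A * Real.sin (ψ - φ) : ℝ) : ℂ))
       = Complex.exp (Complex.I * (((ν:ℝ) * φ : ℝ) : ℂ)) *
          Complex.exp (Complex.I * (((ν : ℝ) * (ψ - φ) - A * Real.sin (ψ - φ) : ℝ) : ℂ))
    rw [← Complex.exp_add]
    congr 1
    push_cast; ring
  rw [key]
  rw [intervalIntegral.integral_comp_sub_right (a := 0) (b := 2*Real.pi)
    (fun θ : ℝ => Complex.exp (Complex.I * (((ν : ℝ) * θ - A * Real.sin θ : ℝ) : ℂ))) φ]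
  have hshift : (∫ θ in (0:ℝ) - φ..(2*Real.pi - φ),
      Complex.exp (Complex.I * (((ν : ℝ) * θ - A * Real.sin θ : ℝ) : ℂ)))
      = ∫ θ in (0:ℝ)..(2*Real.pi),
      Complex.exp (Complex.I * (((ν : ℝ) * θ - A * Real.sin θ : ℝ) : ℂ)) := by
    have := hper.intervalIntegral_add_eq ((0:ℝ) - φ) 0
    have e1 : (0:ℝ) - φ + 2*Real.pi = 2*Real.pi - φ := by ring
    have e2 : (0:ℝ) + 2*Real.pi = 2*Real.pi := by ring
    rw [e1, e2] at this
    exact this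
  rw [hshift, besselJ]
  have hpi : ((Real.pi:ℂ)) ≠ 0 := by
    exact_mod_cast Real.pi_ne_zero
  field_simp


lemma hfun_integral (ν : ℤ) (A φ : ℝ) :
    (∫ ψ in (0:ℝ)..(2*Real.pi), hfun ν A φ ψ)
    = (2*Real.pi) * Complex.exp (Complex.I * (((ν:ℝ) * φ : ℝ) : ℂ)) * besselJ ν A := by
  unfold hfun
  exact bessel_shift ν A φ

lemma pointwiseL1 (α : ℤ) (β γ r φ z : ℝ) (n : C3) (i : Fin 3) (ψ : ℝ) :
    ker α β γ ψ ![r*Real.cos φ, r*Real.sin φ, z] * (RotC ψ).mulVec n i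
    = Complex.exp (Complex.I * ((β*z : ℝ) : ℂ)) * Nmat n i 0 * hfun (α+1) (γ*r) φ ψ
      + Complex.exp (Complex.I * ((β*z : ℝ) : ℂ)) * Nmat n i 1 * hfun (α-1) (γ*r) φ ψ
      + Complex.exp (Complex.I * ((β*z : ℝ) : ℂ)) * Nmat n i 2 * hfun α (γ*r) φ ψ := by
  have hker : ker α β γ ψ ![r*Real.cos φ, r*Real.sin φ, z]
      = Complex.exp (Complex.I * ((β*z : ℝ) : ℂ)) * hfun α (γ*r) φ ψ := by
    rw [ker, hfun, ← Complex.exp_add]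
    congr 1
    push_cast [kerph, Real.sin_sub]
    ring
  have hplus : hfun (α+1) (γ*r) φ ψ
      = hfun α (γ*r) φ ψ * (Complex.cos ψ + Complex.sin ψ * Complex.I) := by
    rw [← Complex.exp_mul_I, hfun, hfun, ← Complex.exp_add]
    congr 1
    push_cast
    ring
  have hminus : hfun (α-1) (γ*r) φ ψ
      = hfun α (γ*r) φ ψ * (Complex.cos ψ - Complex.sin ψ * Complex.I) := by
    have : (Complex.cos ψ - Complex.sin ψ * Complex.I)
        = Complex.exp ((-(ψ:ℂ)) * Complex.I) := by
      rw [Complex.exp_mul_I, Complex.cos_neg, Complex.sin_neg]; ring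
    rw [this, hfun, hfun, ← Complex.exp_add]
    congr 1
    push_cast
    ring
  rw [hker, hplus, hminus]
  have hc : (Real.cos ψ : ℂ) = Complex.cos ψ := by simp [Complex.ofReal_cos]
  have hs : (Real.sin ψ : ℂ) = Complex.sin ψ := by simp [Complex.ofReal_sin]
  fin_cases i
  · simp [RotC, Rot, Nmat, Matrix.mulVec, dotProduct, Fin.sum_univ_three, hc, hs]
    ring_nf
    rw [Complex.I_sq]
    ring
  · simp [RotC, Rot, Nmat, Matrix.mulVec, dotProduct, Fin.sum_univ_three, hc, hs]
    ring_nf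
    rw [Complex.I_sq]
    ring
  · simp [RotC, Rot, Nmat, Matrix.mulVec, dotProduct, Fin.sum_univ_three, hc, hs]
    try ring


lemma cont_hfun (ν : ℤ) (A φ : ℝ) : Continuous (hfun ν A φ) := by
  unfold hfun; fun_prop

lemma L1 (α : ℤ) (β γ : ℝ) (n : C3) (r φ z : ℝ) :
    twistedCyl α β γ n r φ z = Fvec α β γ n ![r*Real.cos φ, r*Real.sin φ, z] := by
  funext i
  have hsplit : (∫ ψ in (0:ℝ)..(2*Real.pi),
      ker α β γ ψ ![r*Real.cos φ, r*Real.sin φ, z] * (RotC ψ).mulVec n i)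
      = (∫ ψ in (0:ℝ)..(2*Real.pi),
          (Complex.exp (Complex.I * ((β*z : ℝ) : ℂ)) * Nmat n i 0 * hfun (α+1) (γ*r) φ ψ
          + Complex.exp (Complex.I * ((β*z : ℝ) : ℂ)) * Nmat n i 1 * hfun (α-1) (γ*r) φ ψ
          + Complex.exp (Complex.I * ((β*z : ℝ) : ℂ)) * Nmat n i 2 * hfun α (γ*r) φ ψ)) :=
    intervalIntegral.integral_congr (fun ψ _ => pointwiseL1 α β γ r φ z n i ψ)
  have int1 : IntervalIntegrable (fun ψ => Complex.exp (Complex.I * ((β*z : ℝ) : ℂ)) * Nmat n i 0 * hfun (α+1) (γ*r) φ ψ) volume 0 (2*Real.pi) :=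
    (continuous_const.mul (cont_hfun _ _ _)).intervalIntegrable _ _
  have int2 : IntervalIntegrable (fun ψ => Complex.exp (Complex.I * ((β*z : ℝ) : ℂ)) * Nmat n i 1 * hfun (α-1) (γ*r) φ ψ) volume 0 (2*Real.pi) :=
    (continuous_const.mul (cont_hfun _ _ _)).intervalIntegrable _ _
  have int3 : IntervalIntegrable (fun ψ => Complex.exp (Complex.I * ((β*z : ℝ) : ℂ)) * Nmat n i 2 * hfun α (γ*r) φ ψ) volume 0 (2*Real.pi) :=
    (continuous_const.mul (cont_hfun _ _ _)).intervalIntegrable _ _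
  show twistedCyl α β γ n r φ z i = (1/(2*(Real.pi:ℂ))) * _
  rw [hsplit, intervalIntegral.integral_add (int1.add int2) int3,
    intervalIntegral.integral_add int1 int2,
    intervalIntegral.integral_const_mul, intervalIntegral.integral_const_mul,
    intervalIntegral.integral_const_mul, hfun_integral, hfun_integral, hfun_integral]
  have hp : Complex.exp (Complex.I * ((((α+1:ℤ)):ℝ)*φ : ℝ)) =
      Complex.exp (Complex.I * (((α:ℝ)*φ : ℝ))) * (Complex.cos φ + Complex.sin φ * Complex.I) := by
    rw [← Complex.exp_mul_I, ← Complex.exp_add]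
    congr 1; push_cast; ring
  have hm : Complex.exp (Complex.I * ((((α-1:ℤ)):ℝ)*φ : ℝ)) =
      Complex.exp (Complex.I * (((α:ℝ)*φ : ℝ))) * (Complex.cos φ - Complex.sin φ * Complex.I) := by
    have h2 : (Complex.cos (φ:ℂ) - Complex.sin (φ:ℂ) * Complex.I)
        = Complex.exp ((-(φ:ℂ)) * Complex.I) := by
      rw [Complex.exp_mul_I, Complex.cos_neg, Complex.sin_neg]; ring
    rw [h2, ← Complex.exp_add]
    congr 1; push_cast; ring
  have hz : Complex.exp (Complex.I * (((α:ℝ)*φ + β*z : ℝ) : ℂ))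
      = Complex.exp (Complex.I * ((β*z : ℝ) : ℂ)) * Complex.exp (Complex.I * (((α:ℝ)*φ : ℝ))) := by
    rw [← Complex.exp_add]; congr 1; push_cast; ring
  have hc : (Real.cos φ : ℂ) = Complex.cos φ := by simp [Complex.ofReal_cos]
  have hs : (Real.sin φ : ℂ) = Complex.sin φ := by simp [Complex.ofReal_sin]
  have hpi : ((Real.pi:ℂ)) ≠ 0 := by exact_mod_cast Real.pi_ne_zero
  rw [hp, hm]
  fin_cases i <;>
    simp [twistedCyl, RotC, Rot, Nmat, Jvec, Matrix.mulVec, dotProduct,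
      Fin.sum_univ_three, hz, hc, hs, Complex.exp_add] <;>
    field_simp <;>
    (ring_nf; simp only [Complex.exp_add]; (try rw [Complex.I_sq]); ring)


lemma kerlin_apply (β γ ψ : ℝ) (v : V3) :
    kerlin β γ ψ v = Complex.I * ((-(γ * Real.sin ψ) : ℝ) : ℂ) * (v 0 : ℂ)
      + Complex.I * (((γ * Real.cos ψ) : ℝ) : ℂ) * (v 1 : ℂ)
      + Complex.I * ((β : ℝ) : ℂ) * (v 2 : ℂ) := by
  simp [kerlin, projC]
  try ring

lemma kerlin_single (β γ ψ : ℝ) (j : Fin 3) :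
    kerlin β γ ψ (Pi.single j 1) = Complex.I * kvC β γ ψ j := by
  fin_cases j <;>
    simp [kerlin_apply, kvC, Pi.single_apply]

lemma kerlin_cont (β γ : ℝ) : Continuous (fun ψ => kerlin β γ ψ) := by
  unfold kerlin
  apply Continuous.add
  apply Continuous.add
  · exact (Continuous.mul continuous_const (by fun_prop : Continuous fun ψ : ℝ => ((-(γ * Real.sin ψ) : ℝ) : ℂ))).smul continuous_const
  · exact (Continuous.mul continuous_const (by fun_prop : Continuous fun ψ : ℝ => (((γ * Real.cos ψ) : ℝ) : ℂ))).smul continuous_const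
  · exact continuous_const

lemma kerlin_norm (β γ ψ : ℝ) : ‖kerlin β γ ψ‖ ≤ |β| + 2*|γ| := by
  apply ContinuousLinearMap.opNorm_le_bound _ (by positivity)
  intro v
  rw [kerlin_apply]
  have h0 : |v 0| ≤ ‖v‖ := by simpa using norm_le_pi_norm v 0
  have h1 : |v 1| ≤ ‖v‖ := by simpa using norm_le_pi_norm v 1
  have h2 : |v 2| ≤ ‖v‖ := by simpa using norm_le_pi_norm v 2
  have hs : |Real.sin ψ| ≤ 1 := Real.abs_sin_le_one ψ
  have hc : |Real.cos ψ| ≤ 1 := Real.abs_cos_le_one ψ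
  calc ‖Complex.I * ((-(γ * Real.sin ψ) : ℝ) : ℂ) * (v 0 : ℂ)
      + Complex.I * (((γ * Real.cos ψ) : ℝ) : ℂ) * (v 1 : ℂ)
      + Complex.I * ((β : ℝ) : ℂ) * (v 2 : ℂ)‖
      ≤ ‖Complex.I * ((-(γ * Real.sin ψ) : ℝ) : ℂ) * (v 0 : ℂ)
      + Complex.I * (((γ * Real.cos ψ) : ℝ) : ℂ) * (v 1 : ℂ)‖
        + ‖Complex.I * ((β : ℝ) : ℂ) * (v 2 : ℂ)‖ := norm_add_le _ _
    _ ≤ (‖Complex.I * ((-(γ * Real.sin ψ) : ℝ) : ℂ) * (v 0 : ℂ)‖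
        + ‖Complex.I * (((γ * Real.cos ψ) : ℝ) : ℂ) * (v 1 : ℂ)‖)
        + ‖Complex.I * ((β : ℝ) : ℂ) * (v 2 : ℂ)‖ := by
          gcongr; exact norm_add_le _ _
    _ = |γ * Real.sin ψ| * |v 0| + |γ * Real.cos ψ| * |v 1| + |β| * |v 2| := by
          simp only [norm_mul, Complex.norm_I, one_mul, Complex.norm_real,
            Real.norm_eq_abs, abs_neg]
          rw [abs_mul, abs_mul]
    _ ≤ (|β| + 2*|γ|) * ‖v‖ := by
          rw [abs_mul, abs_mul]
          have e0 : |γ| * |Real.sin ψ| * |v 0| ≤ |γ| * ‖v‖ := by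
            calc |γ| * |Real.sin ψ| * |v 0| ≤ |γ| * 1 * ‖v‖ := by
                  apply mul_le_mul _ h0 (abs_nonneg _) (by positivity)
                  exact mul_le_mul_of_nonneg_left hs (abs_nonneg _)
              _ = |γ| * ‖v‖ := by ring
          have e1 : |γ| * |Real.cos ψ| * |v 1| ≤ |γ| * ‖v‖ := by
            calc |γ| * |Real.cos ψ| * |v 1| ≤ |γ| * 1 * ‖v‖ := by
                  apply mul_le_mul _ h1 (abs_nonneg _) (by positivity)
                  exact mul_le_mul_of_nonneg_left hc (abs_nonneg _)
              _ = |γ| * ‖v‖ := by ring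
          have e2 : |β| * |v 2| ≤ |β| * ‖v‖ :=
            mul_le_mul_of_nonneg_left h2 (abs_nonneg _)
          nlinarith [norm_nonneg v]

lemma ker_norm (α : ℤ) (β γ ψ : ℝ) (x : V3) : ‖ker α β γ ψ x‖ = 1 := by
  rw [ker]
  rw [show Complex.I * ((kerph α β γ ψ x : ℝ) : ℂ)
      = ((kerph α β γ ψ x : ℝ) : ℂ) * Complex.I by ring]
  simp [Complex.norm_exp_ofReal_mul_I]

lemma ker_cont (α : ℤ) (β γ : ℝ) (x : V3) : Continuous (fun ψ => ker α β γ ψ x) := by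
  unfold ker kerph; fun_prop

lemma ker_contx (α : ℤ) (β γ ψ : ℝ) : Continuous (fun x : V3 => ker α β γ ψ x) := by
  unfold ker kerph
  fun_prop

lemma ker_hasFDeriv (α : ℤ) (β γ ψ : ℝ) (x : V3) :
    HasFDerivAt (fun y => ker α β γ ψ y) (ker α β γ ψ x • kerlin β γ ψ) x := by
  have heq : ∀ y : V3, Complex.I * ((kerph α β γ ψ y : ℝ) : ℂ)
      = (Complex.I * (((α:ℝ)*ψ : ℝ) : ℂ)) + kerlin β γ ψ y := by
    intro y
    rw [kerlin_apply]
    push_cast [kerph]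
    ring
  have h1 : HasFDerivAt (fun y : V3 =>
      (Complex.I * (((α:ℝ)*ψ : ℝ) : ℂ)) + kerlin β γ ψ y) (kerlin β γ ψ) x :=
    ((kerlin β γ ψ).hasFDerivAt).const_add _
  have h2 := h1.cexp
  have h3 : (fun y : V3 => Complex.exp ((Complex.I * (((α:ℝ)*ψ : ℝ) : ℂ)) + kerlin β γ ψ y))
      = fun y => ker α β γ ψ y := by
    funext y; rw [ker, heq y]
  rw [h3] at h2
  have h4 : Complex.exp ((Complex.I * (((α:ℝ)*ψ : ℝ) : ℂ)) + kerlin β γ ψ x)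
      = ker α β γ ψ x := by rw [ker, heq x]
  rwa [h4] at h2



lemma hasFDerivAt_Fint (α : ℤ) (β γ : ℝ) {c : ℝ → ℂ} (hc : Continuous c) (x : V3) :
    HasFDerivAt (fun y => ∫ ψ in (0:ℝ)..(2*Real.pi), ker α β γ ψ y * c ψ)
      (∫ ψ in (0:ℝ)..(2*Real.pi), c ψ • (ker α β γ ψ x • kerlin β γ ψ)) x := by
  obtain ⟨C, hC⟩ := (isCompact_Icc (a := (0:ℝ)) (b := 2*Real.pi)).exists_bound_of_continuousOn
    hc.continuousOn
  have hsub : Set.uIoc (0:ℝ) (2*Real.pi) ⊆ Set.Icc 0 (2*Real.pi) := by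
    rw [Set.uIoc_of_le (by positivity)]
    exact Set.Ioc_subset_Icc_self
  apply hasFDerivAt_integral_of_dominated_of_fderiv_le''
    (F' := fun (y : V3) (ψ : ℝ) => c ψ • (ker α β γ ψ y • kerlin β γ ψ))
    (bound := fun _ => C * (|β| + 2*|γ|)) (s := Metric.ball x 1) (Metric.ball_mem_nhds x one_pos)
  · exact Filter.Eventually.of_forall (fun y =>
      (((ker_cont α β γ y).mul hc)).aestronglyMeasurable)
  · exact ((ker_cont α β γ x).mul hc).intervalIntegrable _ _
  · exact (hc.smul ((ker_cont α β γ x).smul (kerlin_cont β γ))).aestronglyMeasurable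
  · apply MeasureTheory.ae_restrict_of_forall_mem measurableSet_uIoc
    intro ψ hψ y _
    have e : ‖c ψ • ker α β γ ψ y • kerlin β γ ψ‖
        ≤ ‖c ψ‖ * (‖ker α β γ ψ y‖ * ‖kerlin β γ ψ‖) := by
      refine le_trans (ContinuousLinearMap.opNorm_smul_le _ _) ?_
      gcongr
      exact ContinuousLinearMap.opNorm_smul_le _ _
    rw [ker_norm, one_mul] at e
    refine le_trans e ?_
    have h1 : ‖c ψ‖ ≤ C := hC ψ (hsub hψ)
    have h2 := kerlin_norm β γ ψ
    have h3 := norm_nonneg (kerlin β γ ψ)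
    have h4 := norm_nonneg (c ψ)
    nlinarith
  · exact intervalIntegrable_const
  · apply MeasureTheory.ae_restrict_of_forall_mem measurableSet_uIoc
    intro ψ _ y _
    exact (ker_hasFDeriv α β γ ψ y).mul_const (c ψ)



lemma cont_vc (n : C3) (i : Fin 3) : Continuous fun ψ => (RotC ψ).mulVec n i := by
  fin_cases i <;>
    simp [RotC, Rot, Matrix.mulVec, dotProduct, Fin.sum_univ_three] <;>
    fun_prop

lemma pd_Fvec (α : ℤ) (β γ : ℝ) (n : C3) (x : V3) (i j : Fin 3) :
    pd j (fun y => Fvec α β γ n y i) x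
    = (1/(2*(Real.pi:ℂ))) * ∫ ψ in (0:ℝ)..(2*Real.pi),
        ker α β γ ψ x * (RotC ψ).mulVec n i * (Complex.I * kvC β γ ψ j) := by
  have h := (hasFDerivAt_Fint α β γ (cont_vc n i) x).const_mul (1/(2*(Real.pi:ℂ)))
  have heq : (fun y => Fvec α β γ n y i)
      = fun y => (1/(2*(Real.pi:ℂ))) *
          ∫ ψ in (0:ℝ)..(2*Real.pi), ker α β γ ψ y * (RotC ψ).mulVec n i := rfl
  rw [pd, heq, h.fderiv]
  have hint : IntervalIntegrable
      (fun ψ => (RotC ψ).mulVec n i • (ker α β γ ψ x • kerlin β γ ψ)) volume 0 (2*Real.pi) :=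
    ((cont_vc n i).smul ((ker_cont α β γ x).smul (kerlin_cont β γ))).intervalIntegrable _ _
  rw [ContinuousLinearMap.coe_smul', Pi.smul_apply,
    ContinuousLinearMap.intervalIntegral_apply hint, smul_eq_mul]
  congr 1
  apply intervalIntegral.integral_congr
  intro ψ _
  simp only [ContinuousLinearMap.smul_apply, smul_eq_mul, kerlin_single]
  ring


lemma pyth (ψ : ℝ) : ((Real.sin ψ : ℂ))^2 + ((Real.cos ψ : ℂ))^2 = 1 := by
  exact_mod_cast congrArg (Complex.ofReal) (Real.sin_sq_add_cos_sq ψ)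

lemma intFveci (α : ℤ) (β γ : ℝ) (n : C3) (x : V3) (i j : Fin 3) :
    IntervalIntegrable (fun ψ => ker α β γ ψ x * (RotC ψ).mulVec n i * (Complex.I * kvC β γ ψ j))
      volume 0 (2*Real.pi) := by
  apply Continuous.intervalIntegrable
  apply Continuous.mul
  · exact (ker_cont α β γ x).mul (cont_vc n i)
  · apply continuous_const.mul
    fin_cases j <;> simp [kvC] <;> fun_prop

lemma curl_Fvec (α : ℤ) (β γ : ℝ) (n : C3) (x : V3) :
    curl3 (fun y => Fvec α β γ n y) x
    = Fvec α β γ (Complex.I • crossC ![0,(γ:ℂ),(β:ℂ)] n) x := by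
  have main : ∀ i1 j1 i2 j2 i3 : Fin 3,
      (∀ ψ : ℝ, (RotC ψ).mulVec n i1 * (Complex.I * kvC β γ ψ j1)
        - (RotC ψ).mulVec n i2 * (Complex.I * kvC β γ ψ j2)
        = (RotC ψ).mulVec (Complex.I • crossC ![0,(γ:ℂ),(β:ℂ)] n) i3) →
      pd j1 (fun y => Fvec α β γ n y i1) x - pd j2 (fun y => Fvec α β γ n y i2) x
        = Fvec α β γ (Complex.I • crossC ![0,(γ:ℂ),(β:ℂ)] n) x i3 := by
    intro i1 j1 i2 j2 i3 hptw
    rw [pd_Fvec, pd_Fvec, ← mul_sub,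
      ← intervalIntegral.integral_sub (intFveci α β γ n x _ _) (intFveci α β γ n x _ _)]
    show _ = (1/(2*(Real.pi:ℂ))) * _
    congr 1
    apply intervalIntegral.integral_congr
    intro ψ _
    have := hptw ψ
    calc ker α β γ ψ x * (RotC ψ).mulVec n i1 * (Complex.I * kvC β γ ψ j1) -
          ker α β γ ψ x * (RotC ψ).mulVec n i2 * (Complex.I * kvC β γ ψ j2)
        = ker α β γ ψ x * ((RotC ψ).mulVec n i1 * (Complex.I * kvC β γ ψ j1)
            - (RotC ψ).mulVec n i2 * (Complex.I * kvC β γ ψ j2)) := by ring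
      _ = _ := by rw [this]
  have simpset : True := trivial
  have ptw0 : ∀ ψ : ℝ, (RotC ψ).mulVec n 2 * (Complex.I * kvC β γ ψ 1)
      - (RotC ψ).mulVec n 1 * (Complex.I * kvC β γ ψ 2)
      = (RotC ψ).mulVec (Complex.I • crossC ![0,(γ:ℂ),(β:ℂ)] n) 0 := by
    intro ψ
    simp [RotC, Rot, Matrix.mulVec, dotProduct, Fin.sum_univ_three, kvC, crossC,
      Pi.smul_apply, smul_eq_mul]
    ring
  have ptw1 : ∀ ψ : ℝ, (RotC ψ).mulVec n 0 * (Complex.I * kvC β γ ψ 2)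
      - (RotC ψ).mulVec n 2 * (Complex.I * kvC β γ ψ 0)
      = (RotC ψ).mulVec (Complex.I • crossC ![0,(γ:ℂ),(β:ℂ)] n) 1 := by
    intro ψ
    simp [RotC, Rot, Matrix.mulVec, dotProduct, Fin.sum_univ_three, kvC, crossC,
      Pi.smul_apply, smul_eq_mul]
    ring
  have ptw2 : ∀ ψ : ℝ, (RotC ψ).mulVec n 1 * (Complex.I * kvC β γ ψ 0)
      - (RotC ψ).mulVec n 0 * (Complex.I * kvC β γ ψ 1)
      = (RotC ψ).mulVec (Complex.I • crossC ![0,(γ:ℂ),(β:ℂ)] n) 2 := by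
    intro ψ
    simp [RotC, Rot, Matrix.mulVec, dotProduct, Fin.sum_univ_three, kvC, crossC,
      Pi.smul_apply, smul_eq_mul]
    linear_combination (-Complex.I * (γ:ℂ) * n 0) * Complex.sin_sq_add_cos_sq (ψ:ℂ)
  funext i
  fin_cases i
  · show pd 1 (fun y => Fvec α β γ n y 2) x - pd 2 (fun y => Fvec α β γ n y 1) x = _
    exact main 2 1 1 2 0 ptw0
  · show pd 2 (fun y => Fvec α β γ n y 0) x - pd 0 (fun y => Fvec α β γ n y 2) x = _
    exact main 0 2 2 0 1 ptw1
  · show pd 0 (fun y => Fvec α β γ n y 1) x - pd 1 (fun y => Fvec α β γ n y 0) x = _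
    exact main 1 0 0 1 2 ptw2


theorem twistedWave_curl
    (α : ℤ) (β γ : ℝ) (hγ : 0 < γ) (n : C3)
    (E : V3 → C3)
    (hE : ∀ r φ z : ℝ, 0 < r →
      E ![r * Real.cos φ, r * Real.sin φ, z] = twistedCyl α β γ n r φ z) :
    ∀ r φ z : ℝ, 0 < r →
      curl3 E ![r * Real.cos φ, r * Real.sin φ, z] =
        twistedCyl α β γ (Complex.I • crossC ![0, (γ : ℂ), (β : ℂ)] n) r φ z := by
  intro r φ z hr
  set x : V3 := ![r * Real.cos φ, r * Real.sin φ, z] with hxdef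
  have hEF : ∀ y : V3, 0 < y 0^2 + y 1^2 → E y = Fvec α β γ n y := by
    intro y hy
    have hw : ((y 0 : ℂ) + (y 1 : ℂ) * Complex.I) ≠ 0 := by
      intro h
      have h0 : y 0 = 0 := by
        have := congrArg Complex.re h
        simpa using this
      have h1 : y 1 = 0 := by
        have := congrArg Complex.im h
        simpa using this
      rw [h0, h1] at hy; norm_num at hy
    set w : ℂ := (y 0 : ℂ) + (y 1 : ℂ) * Complex.I with hwdef
    have hre : w.re = y 0 := by simp [hwdef]
    have him : w.im = y 1 := by simp [hwdef]
    have hrpos : 0 < ‖w‖ := by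
      simpa using norm_pos_iff.mpr hw
    have hc : ‖w‖ * Real.cos (Complex.arg w) = y 0 := by
      rw [Complex.norm_mul_cos_arg, hre]
    have hs : ‖w‖ * Real.sin (Complex.arg w) = y 1 := by
      rw [Complex.norm_mul_sin_arg, him]
    have hyvec : (![‖w‖ * Real.cos (Complex.arg w),
        ‖w‖ * Real.sin (Complex.arg w), y 2] : V3) = y := by
      funext i
      fin_cases i <;> simp [hc, hs]
    have := hE (‖w‖) (Complex.arg w) (y 2) hrpos
    rw [hyvec] at this
    rw [this, L1, hyvec]
  have hxmem : 0 < x 0^2 + x 1^2 := by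
    have : x 0^2 + x 1^2 = r^2 := by
      simp [hxdef]
      nlinarith [Real.sin_sq_add_cos_sq φ]
    rw [this]; positivity
  have hopen : IsOpen {y : V3 | 0 < y 0^2 + y 1^2} := by
    have : Continuous fun y : V3 => y 0^2 + y 1^2 := by fun_prop
    exact isOpen_lt continuous_const this
  have hnhds : {y : V3 | 0 < y 0^2 + y 1^2} ∈ nhds x := hopen.mem_nhds hxmem
  have hcomp : ∀ i : Fin 3, (fun y => E y i) =ᶠ[nhds x] (fun y => Fvec α β γ n y i) :=
    fun i => Filter.eventually_of_mem hnhds (fun y hy => by simp only [hEF y hy])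
  have hpd : ∀ i j : Fin 3, pd j (fun y => E y i) x = pd j (fun y => Fvec α β γ n y i) x := by
    intro i j
    unfold pd
    rw [Filter.EventuallyEq.fderiv_eq (hcomp i)]
  have hcurl : curl3 E x = curl3 (fun y => Fvec α β γ n y) x := by
    unfold curl3
    rw [hpd 0 1, hpd 0 2, hpd 1 0, hpd 1 2, hpd 2 0, hpd 2 1]
  rw [hcurl, curl_Fvec, L1, ← hxdef]
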